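/- As x → 0 along real x ∈ (0,1), the matrix exp(−(2πi)^{−1} log(x) · N_0) · M(x) converges to the identity matrix I, where exp is the matrix exponential. -/

import Mathlib

open Complex

noncomputable section

/-- The nilpotent endomorphism `N₀` (as a matrix, 0-based indices):
`N₀ e_j = e_{j-1}` for `1 ≤ j ≤ n-1` (paper: `2 ≤ j ≤ n`), `N₀ e_0 = N₀ e_n = 0`. -/
def N0 (n : ℕ) : Matrix (Fin (n + 1)) (Fin (n + 1)) ℂ :=
  fun i j => if (i : ℕ) + 1 = (j : ℕ) ∧ (j : ℕ) < n then 1 else 0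

/-- The nilpotent endomorphism `N₁` (0-based indices): `N₁ e_n = -e_{n-1}`
(paper: `N₁ e_{n+1} = -e_n`), and `N₁ e_j = 0` otherwise. -/
def N1 (n : ℕ) : Matrix (Fin (n + 1)) (Fin (n + 1)) ℂ :=
  fun i j => if (i : ℕ) + 1 = n ∧ (j : ℕ) = n then -1 else 0

/-- `ad N₀` acting on matrices: `(ad N₀)(M) = N₀ M - M N₀`. -/
def adN0 (n : ℕ) : Matrix (Fin (n + 1)) (Fin (n + 1)) ℂ → Matrix (Fin (n + 1)) (Fin (n + 1)) ℂ :=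
  fun M => N0 n * M - M * N0 n

/-- The polylogarithm `Li_j(x) = ∑_{k≥1} x^k / k^j`, for `|x| < 1`. -/
def Li (j : ℕ) (x : ℂ) : ℂ := ∑' k : ℕ, x ^ (k + 1) / ((k : ℂ) + 1) ^ j

/-- The slit open unit disc `U = {x : |x| < 1, x ∉ ℝ_{≤0}}`. -/
def U : Set ℂ := {x | ‖x‖ < 1 ∧ ¬(x.im = 0 ∧ x.re ≤ 0)}

/-- The matrix `M(x)` of solutions (0-based indices): diagonal entries `1`,
`M(x)_{i,j} = ((2πi)⁻¹ log x)^{j-i}/(j-i)!` for `i < j < n` (paper: `1 ≤ j < k ≤ n`),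
`M(x)_{i,n} = -(2πi)^{-(n-i)} Li_{n-i}(x)` for `i < n` (paper: `M_{j,n+1}`, `1 ≤ j ≤ n`). -/
def Mmat (n : ℕ) (x : ℂ) : Matrix (Fin (n + 1)) (Fin (n + 1)) ℂ := fun i j =>
  if i = j then 1
  else if (i : ℕ) < (j : ℕ) ∧ (j : ℕ) < n then
    ((2 * (Real.pi : ℂ) * I)⁻¹ * Complex.log x) ^ ((j : ℕ) - (i : ℕ)) / ((j : ℕ) - (i : ℕ)).factorial
  else if (i : ℕ) < (j : ℕ) ∧ (j : ℕ) = n then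
    -((2 * (Real.pi : ℂ) * I)⁻¹) ^ (n - (i : ℕ)) * Li (n - (i : ℕ)) x
  else 0


lemma N0_pow_apply (n m : ℕ) (i j : Fin (n+1)) :
    ((N0 n) ^ m) i j = if (i:ℕ) + m = (j:ℕ) ∧ ((j:ℕ) < n ∨ m = 0) then 1 else 0 := by
  induction m generalizing j with
  | zero =>
    simp only [pow_zero, Matrix.one_apply, Nat.add_zero, or_true, and_true, Fin.ext_iff]
  | succ m ih =>
    rw [pow_succ, Matrix.mul_apply]
    simp only [ih, N0, ite_mul, one_mul, zero_mul, mul_ite, mul_one, mul_zero]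
    by_cases h : (i:ℕ) + (m+1) = (j:ℕ) ∧ (j:ℕ) < n
    · rw [if_pos ⟨h.1, Or.inl h.2⟩]
      have hk : (i:ℕ) + m < n + 1 := by omega
      rw [Finset.sum_eq_single (⟨(i:ℕ) + m, hk⟩ : Fin (n+1))]
      · rw [if_pos, if_pos] <;> simp <;> omega
      · intro k _ hne
        split_ifs with h2 h3
        · exact absurd (Fin.ext (by simp only [Fin.val_mk]; omega)) hne
        · rfl
        · rfl
      · intro h; exact absurd (Finset.mem_univ _) h
    · rw [if_neg (by omega)]
      apply Finset.sum_eq_zero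
      intro k _
      split_ifs with h2 h3 <;> first | rfl | omega

lemma N0_pow_eq_zero {n m : ℕ} (hn : 1 ≤ n) (hm : n ≤ m) : (N0 n) ^ m = 0 := by
  ext i j
  rw [N0_pow_apply, Matrix.zero_apply, if_neg]
  rintro ⟨h1, h2 | h2⟩ <;> omega

lemma exp_smul_N0 {n : ℕ} (hn : 1 ≤ n) (b : ℂ) :
    NormedSpace.exp (b • N0 n) =
      ∑ m ∈ Finset.range n, (b ^ m * ((m.factorial : ℂ))⁻¹) • (N0 n) ^ m := by
  rw [NormedSpace.exp_eq_tsum (𝕂 := ℂ)]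
  beta_reduce
  rw [tsum_eq_sum (s := Finset.range n) (by
    intro m hm
    rw [smul_pow, N0_pow_eq_zero hn (by simpa using hm)]
    simp)]
  refine Finset.sum_congr rfl fun m _ => ?_
  rw [smul_pow, smul_smul, mul_comm]

lemma Li_norm_le (j : ℕ) (x : ℂ) (hx : ‖x‖ < 1) : ‖Li j x‖ ≤ ‖x‖ / (1 - ‖x‖) := by
  have hg : HasSum (fun k : ℕ => ‖x‖ ^ (k + 1)) (‖x‖ / (1 - ‖x‖)) := by
    have := (hasSum_geometric_of_lt_one (norm_nonneg x) hx).mul_left ‖x‖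
    simpa [pow_succ, mul_comm, div_eq_mul_inv] using this
  refine tsum_of_norm_bounded hg fun k => ?_
  rw [norm_div]
  have h1 : (1:ℝ) ≤ ‖((k : ℂ) + 1) ^ j‖ := by
    rw [norm_pow]
    apply one_le_pow₀
    have : ((k : ℂ) + 1) = ((k + 1 : ℕ) : ℂ) := by push_cast; ring
    rw [this, Complex.norm_natCast]
    exact_mod_cast Nat.one_le_iff_ne_zero.2 (Nat.succ_ne_zero k)
  calc ‖x ^ (k+1)‖ / ‖((k:ℂ)+1)^j‖ ≤ ‖x ^ (k+1)‖ := div_le_self (norm_nonneg _) h1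
    _ = ‖x‖ ^ (k+1) := norm_pow x (k+1)

lemma real_aux (m : ℕ) :
    Filter.Tendsto (fun t : ℝ => (-Real.log t) ^ m * t) (nhdsWithin 0 (Set.Ioi 0)) (nhds 0) := by
  have h1 : Filter.Tendsto (fun t : ℝ => -Real.log t) (nhdsWithin 0 (Set.Ioi 0)) Filter.atTop :=
    Filter.tendsto_neg_atBot_atTop.comp Real.tendsto_log_nhdsGT_zero
  have h2 := (Real.tendsto_pow_mul_exp_neg_atTop_nhds_zero m).comp h1
  refine h2.congr' ?_
  filter_upwards [self_mem_nhdsWithin] with t ht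
  simp only [Function.comp_apply, neg_neg, Real.exp_log ht]

lemma master (m j : ℕ) :
    Filter.Tendsto (fun t : ℝ => (Complex.log (t:ℂ)) ^ m * Li j (t:ℂ))
      (nhdsWithin 0 (Set.Ioo (0:ℝ) 1)) (nhds 0) := by
  apply squeeze_zero_norm' (a := fun t : ℝ => (-Real.log t) ^ m * (2 * t))
  · have hh : ∀ᶠ t : ℝ in nhdsWithin 0 (Set.Ioo (0:ℝ) 1), t < 1/2 :=
      Filter.Eventually.filter_mono nhdsWithin_le_nhds (gt_mem_nhds (by norm_num))
    filter_upwards [self_mem_nhdsWithin, hh] with t ht ht2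
    obtain ⟨ht0, ht1⟩ := ht
    rw [norm_mul, norm_pow]
    have hlog : ‖Complex.log (t:ℂ)‖ = -Real.log t := by
      rw [← Complex.ofReal_log ht0.le, Complex.norm_real,
        Real.norm_eq_abs, abs_of_nonpos (Real.log_nonpos ht0.le ht1.le)]
    have hnormt : ‖(t:ℂ)‖ = t := by
      rw [Complex.norm_real, Real.norm_eq_abs, abs_of_pos ht0]
    have hLi : ‖Li j (t:ℂ)‖ ≤ 2 * t := by
      have := Li_norm_le j (t:ℂ) (by rw [hnormt]; linarith)
      rw [hnormt] at this
      refine this.trans ?_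
      rw [div_le_iff₀ (by linarith)]
      nlinarith
    rw [hlog]
    have h1 : (0:ℝ) ≤ (-Real.log t) ^ m := by
      apply pow_nonneg; simp [Real.log_nonpos ht0.le ht1.le]
    exact mul_le_mul_of_nonneg_left hLi h1
  · have h := ((real_aux m).const_mul 2).mono_left
      (nhdsWithin_mono 0 (fun t ht => ht.1 : Set.Ioo (0:ℝ) 1 ⊆ Set.Ioi 0))
    rw [mul_zero] at h
    refine h.congr fun t => by ring

def Dmat (n : ℕ) (x : ℂ) : Matrix (Fin (n+1)) (Fin (n+1)) ℂ := fun i j =>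
  if (i:ℕ) < n ∧ (j:ℕ) = n then
    -((2 * (Real.pi : ℂ) * I)⁻¹) ^ (n - (i:ℕ)) * Li (n - (i:ℕ)) x else 0

lemma Mmat_eq {n : ℕ} (hn : 1 ≤ n) (x : ℂ) :
    Mmat n x =
      NormedSpace.exp (((2*(Real.pi:ℂ)*I)⁻¹ * Complex.log x) • N0 n) + Dmat n x := by
  rw [exp_smul_N0 hn]
  ext i j
  rw [Matrix.add_apply, Matrix.sum_apply]
  simp only [Matrix.smul_apply, N0_pow_apply, smul_eq_mul, mul_ite, mul_one, mul_zero]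
  set b := (2*(Real.pi:ℂ)*I)⁻¹ * Complex.log x with hb
  have hij' : i = j ↔ (i:ℕ) = (j:ℕ) := Fin.ext_iff
  by_cases hij : i = j
  · have he : (i:ℕ) = (j:ℕ) := hij'.1 hij
    rw [Mmat, if_pos hij, Dmat]
    rw [if_neg (by omega), add_zero,
      Finset.sum_eq_single 0 (fun m _ hm => if_neg (by omega))
        (fun h => absurd (Finset.mem_range.2 hn) h),
      if_pos ⟨by omega, Or.inr rfl⟩]
    norm_num
  · have he : (i:ℕ) ≠ (j:ℕ) := fun h => hij (hij'.2 h)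
    by_cases h2 : (i:ℕ) < (j:ℕ) ∧ (j:ℕ) < n
    · rw [Mmat, if_neg hij, if_pos h2, Dmat, if_neg (by omega), add_zero,
        Finset.sum_eq_single ((j:ℕ) - (i:ℕ)) (fun m _ hm => if_neg (by omega))
          (fun h => absurd (Finset.mem_range.2 (by omega)) h),
        if_pos ⟨by omega, Or.inl h2.2⟩, div_eq_mul_inv]
    · by_cases h3 : (i:ℕ) < (j:ℕ) ∧ (j:ℕ) = n
      · rw [Mmat, if_neg hij, if_neg h2, if_pos h3, Dmat, if_pos ⟨by omega, h3.2⟩,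
          Finset.sum_eq_zero (fun m _ => if_neg (by omega)), zero_add]
      · rw [Mmat, if_neg hij, if_neg h2, if_neg h3, Dmat, if_neg (by omega),
          Finset.sum_eq_zero (fun m _ => if_neg (by omega)), add_zero]

/-- As `x → 0` along real `x ∈ (0,1)`,
`exp(-(2πi)⁻¹ log(x) · N₀) · M(x)` converges to the identity matrix. -/
theorem tendsto_exp_neg_log_N0_mul_Mmat (n : ℕ) (hn : 1 ≤ n) :
    Filter.Tendsto
      (fun t : ℝ =>
        NormedSpace.exp ((-((2 * (Real.pi : ℂ) * I)⁻¹ * Complex.log (t : ℂ))) • N0 n) *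
          Mmat n (t : ℂ))
      (nhdsWithin 0 (Set.Ioo 0 1)) (nhds 1) := by
  have hfun : (fun t : ℝ =>
        NormedSpace.exp ((-((2 * (Real.pi : ℂ) * I)⁻¹ * Complex.log (t : ℂ))) • N0 n) *
          Mmat n (t : ℂ))
      = fun t : ℝ => 1 + ∑ m ∈ Finset.range n,
          (N0 n) ^ m *
            (((-((2 * (Real.pi : ℂ) * I)⁻¹ * Complex.log (t:ℂ))) ^ m * ((m.factorial : ℂ))⁻¹) •
              Dmat n (t:ℂ)) := by
    funext t
    set b := (2 * (Real.pi : ℂ) * I)⁻¹ * Complex.log (t:ℂ) with hb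
    rw [Mmat_eq hn, mul_add]
    congr 1
    · have hcomm : Commute ((-b) • N0 n) (b • N0 n) :=
        ((Commute.refl (N0 n)).smul_left (-b)).smul_right b
      rw [← Matrix.exp_add_of_commute _ _ hcomm]
      have : (-b) • N0 n + b • N0 n = 0 := by rw [← add_smul]; simp
      rw [this, NormedSpace.exp_zero]
    · rw [exp_smul_N0 hn, Finset.sum_mul]
      refine Finset.sum_congr rfl fun m _ => ?_
      rw [smul_mul_assoc, mul_smul_comm]
  rw [hfun]
  have h0 : Filter.Tendsto
      (fun t : ℝ => ∑ m ∈ Finset.range n,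
          (N0 n) ^ m *
            (((-((2 * (Real.pi : ℂ) * I)⁻¹ * Complex.log (t:ℂ))) ^ m * ((m.factorial : ℂ))⁻¹) •
              Dmat n (t:ℂ)))
      (nhdsWithin 0 (Set.Ioo 0 1)) (nhds 0) := by
    have hterm : ∀ m : ℕ, Filter.Tendsto
        (fun t : ℝ =>
          (N0 n) ^ m *
            (((-((2 * (Real.pi : ℂ) * I)⁻¹ * Complex.log (t:ℂ))) ^ m * ((m.factorial : ℂ))⁻¹) •
              Dmat n (t:ℂ)))
        (nhdsWithin 0 (Set.Ioo 0 1)) (nhds (0 : Matrix (Fin (n+1)) (Fin (n+1)) ℂ)) := by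
      intro m
      have hin : Filter.Tendsto
          (fun t : ℝ =>
            ((-((2 * (Real.pi : ℂ) * I)⁻¹ * Complex.log (t:ℂ))) ^ m * ((m.factorial : ℂ))⁻¹) •
              Dmat n (t:ℂ))
          (nhdsWithin 0 (Set.Ioo 0 1)) (nhds 0) := by
        refine tendsto_pi_nhds.2 fun i => tendsto_pi_nhds.2 fun j => ?_
        show Filter.Tendsto _ _ (nhds ((0 : Matrix (Fin (n+1)) (Fin (n+1)) ℂ) i j))
        rw [Matrix.zero_apply]
        simp only [Matrix.smul_apply, smul_eq_mul, Dmat]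
        by_cases hc : (i:ℕ) < n ∧ (j:ℕ) = n
        · simp only [if_pos hc]
          have hm := (master m (n - (i:ℕ))).const_mul
            ((-(2 * (Real.pi : ℂ) * I)⁻¹) ^ m * ((m.factorial : ℂ))⁻¹ *
              (-((2 * (Real.pi : ℂ) * I)⁻¹) ^ (n - (i:ℕ))))
          rw [mul_zero] at hm
          refine hm.congr fun t => ?_
          rw [show -((2 * (Real.pi : ℂ) * I)⁻¹ * Complex.log (t:ℂ))
              = (-(2 * (Real.pi : ℂ) * I)⁻¹) * Complex.log (t:ℂ) by ring, mul_pow]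
          ring
        · simp only [if_neg hc, mul_zero]
          exact tendsto_const_nhds
      have := hin.const_mul ((N0 n) ^ m)
      rwa [mul_zero] at this
    have := tendsto_finset_sum (Finset.range n) (fun m _ => hterm m)
    simpa using this
  have := Filter.Tendsto.const_add (1 : Matrix (Fin (n+1)) (Fin (n+1)) ℂ) h0
  simpa using this
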